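/- Suppose u ∈ H¹(S^d,dσ) is a non-constant optimizer for inequality (GNS2) with ‖u‖ₚ = 1, and set a = ‖∇u‖₂², b = ‖u‖₂² < 1. If the flow stationarity condition θ(λ−d)/((p−2)a + λb) + (1−θ)/b = 0 holds together with (p−2)a + λb < λ b^{1/θ −1}, then one cannot have both θ < 1/2 and λ ≤ θd. (Equivalently: θ < 1/2 and λ ≤ θd imply λ − θd > θ(λ−d) + (1−θ)λ b^{1/θ−2} > 0, a contradiction.) -/
import Mathlib


set_option autoImplicit false

/-- Algebraic core of the symmetry proof for `μ₂`: let `u` be a non-constant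
optimizer normalized by `‖u‖ₚ = 1`, with `a = ‖∇u‖₂² ≥ 0` and `b = ‖u‖₂² ∈ (0,1)`.
If the flow stationarity condition `θ(λ−d)/((p−2)a + λb) + (1−θ)/b = 0` holds
together with `(p−2)a + λb < λ b^{1/θ−1}`, then one cannot have both `θ < 1/2`
and `λ ≤ θd`. -/
theorem stmt_18 (d : ℕ) (hd : 1 ≤ d) (p θ lam a b : ℝ) (hp : 2 < p)
    (hθl : (d : ℝ) * (p - 2) / (2 * p) ≤ θ) (hθr : θ ≤ 1) (hθp : 1 - 2 / p < θ)
    (ha : 0 ≤ a) (hb0 : 0 < b) (hb1 : b < 1) (hlam : 0 < lam)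
    (hstat : θ * (lam - d) / ((p - 2) * a + lam * b) + (1 - θ) / b = 0)
    (hopt : (p - 2) * a + lam * b < lam * b ^ (1 / θ - 1)) :
    ¬(θ < 1 / 2 ∧ lam ≤ θ * d) := by
  rintro ⟨hθh, hld⟩
  have hθ0 : 0 < θ := by
    have h2p : 2 / p < 1 := (div_lt_one (by linarith)).mpr (by linarith)
    linarith
  have hA : 0 < (p - 2) * a + lam * b := by
    have : 0 ≤ (p - 2) * a := mul_nonneg (by linarith) ha
    nlinarith
  have hexp : 1 < 1 / θ - 1 := by
    rw [lt_sub_iff_add_lt, lt_div_iff₀ hθ0]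
    linarith
  have hlt : b ^ (1 / θ - 1) < b := by
    have := Real.rpow_lt_rpow_of_exponent_gt hb0 hb1 hexp
    simpa using this
  have hopt' : (p - 2) * a + lam * b < lam * b := by
    calc (p - 2) * a + lam * b < lam * b ^ (1 / θ - 1) := hopt
    _ < lam * b := by nlinarith
  have hstat' : θ * (lam - d) * b + (1 - θ) * ((p - 2) * a + lam * b) = 0 := by
    field_simp at hstat
    linarith
  nlinarith [mul_lt_mul_of_pos_left hopt' (show (0:ℝ) < 1 - θ by linarith)]
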